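/- Let s ∈ ℕ and let ζ_i : ℝ^{m₁} × ℝ^{m₂} → ℝ, i = 1,…,s, be convex and continuous; define Γ(y) := {z ∈ ℝ^{m₂} : ζ_i(y,z) ≤ 0 for all i}. Let (ȳ, z̄) ∈ ℝ^{m₁} × ℝ^{m₂}, ε > 0, and write B := {(y,z) : ‖(y,z) − (ȳ,z̄)‖ ≤ ε}. Let F : ℝ^{m₁} × ℝ^{m₂} → ℝ^{m₂} be differentiable on an open set containing B, and let L_F, L_{∇F} > 0 satisfy ‖F(w) − F(w')‖ ≤ L_F‖w − w'‖ and ‖DF(w) − DF(w')‖_{op} ≤ L_{∇F}‖w − w'‖ for all w, w' in that open set. Let γ > 0, suppose Γ(y) ≠ ∅ for every (y,z) ∈ B, and suppose there is M_θ > 0 such that for every (y,z) ∈ B there exists a minimizer θ*(y,z) ∈ Γ(y) of θ ↦ ⟨F(y,z), θ⟩ + (1/(2γ))‖θ − z‖² over Γ(y) with ‖θ*(y,z)‖ ≤ M_θ. Then the function (y,z) ↦ μ_γ(y,z) + (γ L_F² + L_{∇F} M_θ + 1/(2γ)) ‖(y,z)‖² is convex on B, where μ_γ(y,z) := inf_{θ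 ∈ Γ(y)} ( ⟨F(y,z), θ⟩ + (1/(2γ))‖θ − z‖² ). In particular, μ_γ is prox-regular at (ȳ, z̄). -/

import Mathlib

open scoped RealInnerProductSpace

set_option maxHeartbeats 1000000


lemma combo_norm_sq {E : Type*} [NormedAddCommGroup E] [InnerProductSpace ℝ E]
    (x y : E) (a b : ℝ) (hab : a + b = 1) :
    ‖a • x + b • y‖ ^ 2 = a * ‖x‖ ^ 2 + b * ‖y‖ ^ 2 - a * b * ‖x - y‖ ^ 2 := by
  have hb : b = 1 - a := by linarith
  subst hb
  rw [norm_add_sq_real, norm_sub_sq_real, norm_smul, norm_smul,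
    real_inner_smul_left, real_inner_smul_right, mul_pow, mul_pow,
    Real.norm_eq_abs, Real.norm_eq_abs, sq_abs, sq_abs]
  ring

lemma taylor_aux {E F' : Type*} [NormedAddCommGroup E] [NormedSpace ℝ E]
    [NormedAddCommGroup F'] [NormedSpace ℝ F']
    (f : E → F') (L : ℝ) (hL : 0 ≤ L) (O : Set E)
    (B : Set E) (hB : Convex ℝ B) (hBO : B ⊆ O)
    (hdiff : ∀ w ∈ O, DifferentiableAt ℝ f w)
    (hlip' : ∀ w ∈ O, ∀ w' ∈ O, ‖fderiv ℝ f w - fderiv ℝ f w'‖ ≤ L * ‖w - w'‖)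
    (p : E) (hp : p ∈ B) (q : E) (hq : q ∈ B) :
    ‖f q - f p - fderiv ℝ f p (q - p)‖ ≤ L * ‖q - p‖ * ‖q - p‖ := by
  have hseg : segment ℝ p q ⊆ B := hB.segment_subset hp hq
  have hkey := Convex.norm_image_sub_le_of_norm_hasFDerivWithin_le
    (f := fun x => f x - fderiv ℝ f p x)
    (f' := fun x => fderiv ℝ f x - fderiv ℝ f p)
    (C := L * ‖q - p‖) (s := segment ℝ p q)
    (fun x hx => (((hdiff x (hBO (hseg hx))).hasFDerivAt).sub
      (fderiv ℝ f p).hasFDerivAt).hasFDerivWithinAt)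
    (fun x hx => by
      have h1 : ‖fderiv ℝ f x - fderiv ℝ f p‖ ≤ L * ‖x - p‖ :=
        hlip' x (hBO (hseg hx)) p (hBO hp)
      have h2 : ‖x - p‖ ≤ ‖q - p‖ := by
        obtain ⟨t1, t2, ht1, ht2, hsum, rfl⟩ := hx
        have ht1' : t1 = 1 - t2 := by linarith
        have hxp : t1 • p + t2 • q - p = t2 • (q - p) := by rw [ht1']; module
        rw [hxp, norm_smul, Real.norm_eq_abs, abs_of_nonneg ht2]
        nlinarith [norm_nonneg (q - p)]
      calc ‖fderiv ℝ f x - fderiv ℝ f p‖ ≤ L * ‖x - p‖ := h1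
        _ ≤ L * ‖q - p‖ := mul_le_mul_of_nonneg_left h2 hL)
    (convex_segment p q) (left_mem_segment ℝ p q) (right_mem_segment ℝ p q)
  have heq : (fun x => f x - fderiv ℝ f p x) q - (fun x => f x - fderiv ℝ f p x) p
      = f q - f p - fderiv ℝ f p (q - p) := by
    simp only [map_sub]; abel
  rw [heq] at hkey
  exact hkey

lemma fderiv_norm_aux {E F' : Type*} [NormedAddCommGroup E] [NormedSpace ℝ E]
    [NormedAddCommGroup F'] [NormedSpace ℝ F']
    (f : E → F') (L : ℝ) (hL : 0 ≤ L) (O : Set E) (hO : IsOpen O)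
    (hlip : ∀ w ∈ O, ∀ w' ∈ O, ‖f w - f w'‖ ≤ L * ‖w - w'‖)
    (p : E) (hp : p ∈ O) : ‖fderiv ℝ f p‖ ≤ L := by
  have hlipOn : LipschitzOnWith (Real.toNNReal L) f O := by
    apply LipschitzOnWith.of_dist_le_mul
    intro x hx y hy
    rw [dist_eq_norm, dist_eq_norm, Real.coe_toNNReal L hL]
    exact hlip x hx y hy
  have := norm_fderiv_le_of_lipschitzOn (𝕜 := ℝ) (hO.mem_nhds hp) hlipOn
  rwa [Real.coe_toNNReal L hL] at this

/-- The core algebraic inequality in abstract real inner-product spaces. -/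
lemma gap_key_aux {W E₂ : Type*} [NormedAddCommGroup W] [InnerProductSpace ℝ W]
    [NormedAddCommGroup E₂] [InnerProductSpace ℝ E₂]
    (Fw Fw' Fwl : E₂) (A : W →L[ℝ] E₂) (w w' : W) (z z' θ θ' : E₂)
    (a b γ L_F LdF Mθ : ℝ)
    (ha : 0 ≤ a) (hb : 0 ≤ b) (hab : a + b = 1)
    (hγ : 0 < γ) (hLF : 0 < L_F) (hLdF : 0 < LdF) (hMθ : 0 < Mθ)
    (hA : ‖A‖ ≤ L_F)
    (hT1 : ‖Fw - Fwl - A (w - (a • w + b • w'))‖ ≤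
      LdF * ‖w - (a • w + b • w')‖ * ‖w - (a • w + b • w')‖)
    (hT2 : ‖Fw' - Fwl - A (w' - (a • w + b • w'))‖ ≤
      LdF * ‖w' - (a • w + b • w')‖ * ‖w' - (a • w + b • w')‖)
    (hθn : ‖θ‖ ≤ Mθ) (hθ'n : ‖θ'‖ ≤ Mθ)
    (hzz : ‖z - z'‖ ≤ ‖w - w'‖) :
    ⟪Fwl, a • θ + b • θ'⟫ + (1 / (2 * γ)) * ‖(a • θ + b • θ') - (a • z + b • z')‖ ^ 2 +
      (γ * L_F ^ 2 + LdF * Mθ + 1 / (2 * γ)) * ‖a • w + b • w'‖ ^ 2 ≤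
    a * (⟪Fw, θ⟫ + (1 / (2 * γ)) * ‖θ - z‖ ^ 2 +
      (γ * L_F ^ 2 + LdF * Mθ + 1 / (2 * γ)) * ‖w‖ ^ 2) +
    b * (⟪Fw', θ'⟫ + (1 / (2 * γ)) * ‖θ' - z'‖ ^ 2 +
      (γ * L_F ^ 2 + LdF * Mθ + 1 / (2 * γ)) * ‖w'‖ ^ 2) := by
  have hw_wl : w - (a • w + b • w') = b • (w - w') := by
    rw [show a = 1 - b by linarith]; module
  have hw'_wl : w' - (a • w + b • w') = a • (w' - w) := by
    rw [show b = 1 - a by linarith]; module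
  have hn1 : ‖w - (a • w + b • w')‖ = b * ‖w - w'‖ := by
    rw [hw_wl, norm_smul, Real.norm_eq_abs, abs_of_nonneg hb]
  have hn2 : ‖w' - (a • w + b • w')‖ = a * ‖w - w'‖ := by
    rw [hw'_wl, norm_smul, Real.norm_eq_abs, abs_of_nonneg ha, norm_sub_rev]
  have hq1 : ‖(a • θ + b • θ') - (a • z + b • z')‖ ^ 2
      = a * ‖θ - z‖ ^ 2 + b * ‖θ' - z'‖ ^ 2 - a * b * ‖(θ - z) - (θ' - z')‖ ^ 2 := by
    rw [show (a • θ + b • θ') - (a • z + b • z') = a • (θ - z) + b • (θ' - z') by module,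
      combo_norm_sq _ _ a b hab]
  have hq2 : ‖a • w + b • w'‖ ^ 2 = a * ‖w‖ ^ 2 + b * ‖w'‖ ^ 2 - a * b * ‖w - w'‖ ^ 2 :=
    combo_norm_sq w w' a b hab
  have hl : ⟪Fwl, a • θ + b • θ'⟫ = a * ⟪Fwl, θ⟫ + b * ⟪Fwl, θ'⟫ := by
    rw [inner_add_right, real_inner_smul_right, real_inner_smul_right]
  -- decomposition of linear terms
  have e1 : ⟪Fw - Fwl, θ⟫ = b * ⟪A (w - w'), θ⟫ +
      ⟪Fw - Fwl - A (w - (a • w + b • w')), θ⟫ := by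
    have h' : ⟪A (w - (a • w + b • w')), θ⟫ = b * ⟪A (w - w'), θ⟫ := by
      rw [hw_wl, map_smul, real_inner_smul_left]
    conv_lhs => rw [show Fw - Fwl = A (w - (a • w + b • w')) +
      (Fw - Fwl - A (w - (a • w + b • w'))) by abel]
    rw [inner_add_left, h']
  have e2 : ⟪Fw' - Fwl, θ'⟫ = -(a * ⟪A (w - w'), θ'⟫) +
      ⟪Fw' - Fwl - A (w' - (a • w + b • w')), θ'⟫ := by
    have h' : ⟪A (w' - (a • w + b • w')), θ'⟫ = -(a * ⟪A (w - w'), θ'⟫) := by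
      rw [hw'_wl, map_smul, real_inner_smul_left,
        show w' - w = -(w - w') by abel, map_neg, inner_neg_left]
      ring
    conv_lhs => rw [show Fw' - Fwl = A (w' - (a • w + b • w')) +
      (Fw' - Fwl - A (w' - (a • w + b • w'))) by abel]
    rw [inner_add_left, h']
  -- Cauchy-Schwarz bounds
  have hAu : ‖A (w - w')‖ ≤ L_F * ‖w - w'‖ :=
    (A.le_opNorm _).trans (mul_le_mul_of_nonneg_right hA (norm_nonneg _))
  have b1 : -(L_F * ‖w - w'‖ * ‖(θ - z) - (θ' - z')‖) - L_F * ‖w - w'‖ * ‖w - w'‖ ≤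
      ⟪A (w - w'), θ - θ'⟫ := by
    rw [show θ - θ' = ((θ - z) - (θ' - z')) + (z - z') by abel, inner_add_right]
    have c1 : |⟪A (w - w'), (θ - z) - (θ' - z')⟫| ≤
        (L_F * ‖w - w'‖) * ‖(θ - z) - (θ' - z')‖ :=
      (abs_real_inner_le_norm _ _).trans (mul_le_mul_of_nonneg_right hAu (norm_nonneg _))
    have c2 : |⟪A (w - w'), z - z'⟫| ≤ (L_F * ‖w - w'‖) * ‖w - w'‖ :=
      (abs_real_inner_le_norm _ _).trans
        (mul_le_mul hAu hzz (norm_nonneg _) (by positivity))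
    have n1 := neg_abs_le ⟪A (w - w'), (θ - z) - (θ' - z')⟫
    have n2 := neg_abs_le ⟪A (w - w'), z - z'⟫
    linarith
  have b2 : -(LdF * (b * ‖w - w'‖) * (b * ‖w - w'‖) * Mθ) ≤
      ⟪Fw - Fwl - A (w - (a • w + b • w')), θ⟫ := by
    have h1 : ‖Fw - Fwl - A (w - (a • w + b • w'))‖ ≤
        LdF * (b * ‖w - w'‖) * (b * ‖w - w'‖) := by rw [← hn1]; exact hT1
    have h2 := abs_real_inner_le_norm (Fw - Fwl - A (w - (a • w + b • w'))) θ
    have h3 : ‖Fw - Fwl - A (w - (a • w + b • w'))‖ * ‖θ‖ ≤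
        (LdF * (b * ‖w - w'‖) * (b * ‖w - w'‖)) * Mθ :=
      mul_le_mul h1 hθn (norm_nonneg _) (by positivity)
    have n1 := neg_abs_le ⟪Fw - Fwl - A (w - (a • w + b • w')), θ⟫
    linarith
  have b3 : -(LdF * (a * ‖w - w'‖) * (a * ‖w - w'‖) * Mθ) ≤
      ⟪Fw' - Fwl - A (w' - (a • w + b • w')), θ'⟫ := by
    have h1 : ‖Fw' - Fwl - A (w' - (a • w + b • w'))‖ ≤
        LdF * (a * ‖w - w'‖) * (a * ‖w - w'‖) := by rw [← hn2]; exact hT2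
    have h2 := abs_real_inner_le_norm (Fw' - Fwl - A (w' - (a • w + b • w'))) θ'
    have h3 : ‖Fw' - Fwl - A (w' - (a • w + b • w'))‖ * ‖θ'‖ ≤
        (LdF * (a * ‖w - w'‖) * (a * ‖w - w'‖)) * Mθ :=
      mul_le_mul h1 hθ'n (norm_nonneg _) (by positivity)
    have n1 := neg_abs_le ⟪Fw' - Fwl - A (w' - (a • w + b • w')), θ'⟫
    linarith
  -- AM-GM inequalities
  have am1 : L_F * ‖w - w'‖ * ‖(θ - z) - (θ' - z')‖ ≤
      (1 / (2 * γ)) * ‖(θ - z) - (θ' - z')‖ ^ 2 + (γ / 2) * L_F ^ 2 * ‖w - w'‖ ^ 2 := by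
    have h2 : (0:ℝ) ≤ (1 / (2 * γ)) * (‖(θ - z) - (θ' - z')‖ - γ * L_F * ‖w - w'‖) ^ 2 := by
      positivity
    have h3 : (1 / (2 * γ)) * (‖(θ - z) - (θ' - z')‖ - γ * L_F * ‖w - w'‖) ^ 2
        = (1 / (2 * γ)) * ‖(θ - z) - (θ' - z')‖ ^ 2 + (γ / 2) * L_F ^ 2 * ‖w - w'‖ ^ 2
          - L_F * ‖w - w'‖ * ‖(θ - z) - (θ' - z')‖ := by
      field_simp; ring
    linarith
  have am2 : L_F * ‖w - w'‖ * ‖w - w'‖ ≤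
      (γ / 2) * L_F ^ 2 * ‖w - w'‖ ^ 2 + (1 / (2 * γ)) * ‖w - w'‖ ^ 2 := by
    have h2 : (0:ℝ) ≤ (1 / (2 * γ)) * (γ * L_F * ‖w - w'‖ - ‖w - w'‖) ^ 2 := by positivity
    have h3 : (1 / (2 * γ)) * (γ * L_F * ‖w - w'‖ - ‖w - w'‖) ^ 2
        = (γ / 2) * L_F ^ 2 * ‖w - w'‖ ^ 2 + (1 / (2 * γ)) * ‖w - w'‖ ^ 2
          - L_F * ‖w - w'‖ * ‖w - w'‖ := by
      field_simp; ring
    linarith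
  have br : 0 ≤ -(L_F * ‖w - w'‖ * ‖(θ - z) - (θ' - z')‖) - L_F * ‖w - w'‖ * ‖w - w'‖
      + (1 / (2 * γ)) * ‖(θ - z) - (θ' - z')‖ ^ 2
      + (γ * L_F ^ 2 + LdF * Mθ + 1 / (2 * γ)) * ‖w - w'‖ ^ 2 - LdF * Mθ * ‖w - w'‖ ^ 2 := by
    linarith [am1, am2]
  have hab0 : 0 ≤ a * b := mul_nonneg ha hb
  have key0 : 0 ≤ a * b * ⟪A (w - w'), θ - θ'⟫
      + a * b * (1 / (2 * γ)) * ‖(θ - z) - (θ' - z')‖ ^ 2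
      + a * b * (γ * L_F ^ 2 + LdF * Mθ + 1 / (2 * γ)) * ‖w - w'‖ ^ 2
      - a * b * (LdF * Mθ) * ‖w - w'‖ ^ 2 := by
    have h1 := mul_le_mul_of_nonneg_left b1 hab0
    have h2 := mul_nonneg hab0 br
    linarith [h1, h2]
  have hsub : a * b * ⟪A (w - w'), θ - θ'⟫
      = a * b * ⟪A (w - w'), θ⟫ - a * b * ⟪A (w - w'), θ'⟫ := by
    rw [inner_sub_right]; ring
  have e1' : a * ⟪Fw - Fwl, θ⟫ = a * b * ⟪A (w - w'), θ⟫ +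
      a * ⟪Fw - Fwl - A (w - (a • w + b • w')), θ⟫ := by rw [e1]; ring
  have e2' : b * ⟪Fw' - Fwl, θ'⟫ = -(a * b * ⟪A (w - w'), θ'⟫) +
      b * ⟪Fw' - Fwl - A (w' - (a • w + b • w')), θ'⟫ := by rw [e2]; ring
  have h3 := mul_le_mul_of_nonneg_left b2 ha
  have h4 := mul_le_mul_of_nonneg_left b3 hb
  have habb : a * (LdF * (b * ‖w - w'‖) * (b * ‖w - w'‖) * Mθ)
      + b * (LdF * (a * ‖w - w'‖) * (a * ‖w - w'‖) * Mθ)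
      = a * b * (LdF * Mθ) * ‖w - w'‖ ^ 2 := by
    linear_combination (a * b * LdF * Mθ * ‖w - w'‖ ^ 2) * hab
  have key : 0 ≤ a * ⟪Fw - Fwl, θ⟫ + b * ⟪Fw' - Fwl, θ'⟫
      + a * b * (1 / (2 * γ)) * ‖(θ - z) - (θ' - z')‖ ^ 2
      + a * b * (γ * L_F ^ 2 + LdF * Mθ + 1 / (2 * γ)) * ‖w - w'‖ ^ 2 := by
    linarith [key0, hsub, e1', e2', h3, h4, habb]
  have es1' : a * ⟪Fw - Fwl, θ⟫ = a * ⟪Fw, θ⟫ - a * ⟪Fwl, θ⟫ := by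
    rw [inner_sub_left]; ring
  have es2' : b * ⟪Fw' - Fwl, θ'⟫ = b * ⟪Fw', θ'⟫ - b * ⟪Fwl, θ'⟫ := by
    rw [inner_sub_left]; ring
  have hq1' : (1 / (2 * γ)) * ‖(a • θ + b • θ') - (a • z + b • z')‖ ^ 2
      = (1 / (2 * γ)) * (a * ‖θ - z‖ ^ 2 + b * ‖θ' - z'‖ ^ 2
        - a * b * ‖(θ - z) - (θ' - z')‖ ^ 2) := by rw [hq1]
  have hq2' : (γ * L_F ^ 2 + LdF * Mθ + 1 / (2 * γ)) * ‖a • w + b • w'‖ ^ 2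
      = (γ * L_F ^ 2 + LdF * Mθ + 1 / (2 * γ)) * (a * ‖w‖ ^ 2 + b * ‖w'‖ ^ 2
        - a * b * ‖w - w'‖ ^ 2) := by rw [hq2]
  linarith [key, es1', es2', hq1', hq2', hl]

/-- convexification of the regularized gap-value function. The pair
`(y,z)` is modeled as an element `w` of the ℓ²-product
`WithLp 2 (ℝ^{m₁} × ℝ^{m₂})`, so that `‖w‖` is the Euclidean norm of the pair.
With `Γ(y) := {z : ζ_i(y,z) ≤ 0 ∀ i}` (each `ζ_i` jointly convex continuous),
`F` differentiable on an open set `O ⊇ B := closedBall((ȳ,z̄), ε)` with `F`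
`L_F`-Lipschitz and `DF` `L_{∇F}`-Lipschitz on `O`, and a minimizer of
`θ ↦ ⟨F(y,z), θ⟩ + (1/(2γ))‖θ − z‖²` over `Γ(y)` of norm at most `M_θ` for every
`(y,z) ∈ B`, the function `μ_γ + (γL_F² + L_{∇F}M_θ + 1/(2γ))‖·‖²` is convex on `B`;
in particular `μ_γ` plus a positive multiple of the squared norm is convex on a
neighborhood of `(ȳ,z̄)`, i.e. `μ_γ` is prox-regular there. -/
theorem gapValue_convexification {m₁ m₂ s : ℕ}
    (ζ : Fin s → EuclideanSpace ℝ (Fin m₁) × EuclideanSpace ℝ (Fin m₂) → ℝ)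
    (hζconv : ∀ i, ConvexOn ℝ Set.univ (ζ i))
    (hζcont : ∀ i, Continuous (ζ i))
    (Γ : EuclideanSpace ℝ (Fin m₁) → Set (EuclideanSpace ℝ (Fin m₂)))
    (hΓ : ∀ y, Γ y = {z | ∀ i, ζ i (y, z) ≤ 0})
    (F : WithLp 2 (EuclideanSpace ℝ (Fin m₁) × EuclideanSpace ℝ (Fin m₂)) →
      EuclideanSpace ℝ (Fin m₂))
    (xb : WithLp 2 (EuclideanSpace ℝ (Fin m₁) × EuclideanSpace ℝ (Fin m₂)))
    (ε : ℝ) (hε : 0 < ε)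
    (O : Set (WithLp 2 (EuclideanSpace ℝ (Fin m₁) × EuclideanSpace ℝ (Fin m₂))))
    (hO : IsOpen O) (hBO : Metric.closedBall xb ε ⊆ O)
    (hdiff : ∀ w ∈ O, DifferentiableAt ℝ F w)
    (L_F LdF : ℝ) (hLF : 0 < L_F) (hLdF : 0 < LdF)
    (hlip : ∀ w ∈ O, ∀ w' ∈ O, ‖F w - F w'‖ ≤ L_F * ‖w - w'‖)
    (hlip' : ∀ w ∈ O, ∀ w' ∈ O, ‖fderiv ℝ F w - fderiv ℝ F w'‖ ≤ LdF * ‖w - w'‖)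
    (γ : ℝ) (hγ : 0 < γ)
    (hΓne : ∀ w ∈ Metric.closedBall xb ε, (Γ (WithLp.equiv 2 _ w).1).Nonempty)
    (Mθ : ℝ) (hMθ : 0 < Mθ)
    (hθ : ∀ w ∈ Metric.closedBall xb ε, ∃ θ ∈ Γ (WithLp.equiv 2 _ w).1,
      ‖θ‖ ≤ Mθ ∧ ∀ θ' ∈ Γ (WithLp.equiv 2 _ w).1,
        ⟪F w, θ⟫ + (1 / (2 * γ)) * ‖θ - (WithLp.equiv 2 _ w).2‖ ^ 2 ≤
        ⟪F w, θ'⟫ + (1 / (2 * γ)) * ‖θ' - (WithLp.equiv 2 _ w).2‖ ^ 2)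
    (μ : WithLp 2 (EuclideanSpace ℝ (Fin m₁) × EuclideanSpace ℝ (Fin m₂)) → ℝ)
    (hμ : ∀ w, μ w = sInf
      ((fun θ => ⟪F w, θ⟫ + (1 / (2 * γ)) * ‖θ - (WithLp.equiv 2 _ w).2‖ ^ 2) ''
        Γ (WithLp.equiv 2 _ w).1)) :
    ConvexOn ℝ (Metric.closedBall xb ε)
      (fun w => μ w + (γ * L_F ^ 2 + LdF * Mθ + 1 / (2 * γ)) * ‖w‖ ^ 2) ∧
    ∃ ρ > (0 : ℝ), ∃ δ > (0 : ℝ), ConvexOn ℝ (Metric.closedBall xb δ)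
      (fun w => μ w + (ρ / 2) * ‖w‖ ^ 2) := by
  have hBconv : Convex ℝ (Metric.closedBall xb ε) := convex_closedBall _ _
  have main : ConvexOn ℝ (Metric.closedBall xb ε)
      (fun w => μ w + (γ * L_F ^ 2 + LdF * Mθ + 1 / (2 * γ)) * ‖w‖ ^ 2) := by
    refine ⟨hBconv, ?_⟩
    intro w hw w' hw' a b ha hb hab
    simp only [smul_eq_mul]
    have hwl : a • w + b • w' ∈ Metric.closedBall xb ε := hBconv hw hw' ha hb hab
    obtain ⟨θ, hθΓ, hθn, hθmin⟩ := hθ w hw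
    obtain ⟨θ', hθ'Γ, hθ'n, hθ'min⟩ := hθ w' hw'
    obtain ⟨θ₀, hθ₀Γ, hθ₀n, hθ₀min⟩ := hθ (a • w + b • w') hwl
    have hval : ∀ (v : WithLp 2 (EuclideanSpace ℝ (Fin m₁) × EuclideanSpace ℝ (Fin m₂))),
        ∀ t ∈ Γ (WithLp.equiv 2 _ v).1,
        (∀ t' ∈ Γ (WithLp.equiv 2 _ v).1,
          ⟪F v, t⟫ + (1 / (2 * γ)) * ‖t - (WithLp.equiv 2 _ v).2‖ ^ 2 ≤
          ⟪F v, t'⟫ + (1 / (2 * γ)) * ‖t' - (WithLp.equiv 2 _ v).2‖ ^ 2) →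
        μ v = ⟪F v, t⟫ + (1 / (2 * γ)) * ‖t - (WithLp.equiv 2 _ v).2‖ ^ 2 := by
      intro v t ht hmin
      rw [hμ v]
      exact IsLeast.csInf_eq ⟨Set.mem_image_of_mem _ ht, by
        rintro r ⟨t', ht', rfl⟩; exact hmin t' ht'⟩
    have hμw := hval w θ hθΓ hθmin
    have hμw' := hval w' θ' hθ'Γ hθ'min
    have hμwl := hval (a • w + b • w') θ₀ hθ₀Γ hθ₀min
    have hfst : (WithLp.equiv 2 _ (a • w + b • w')).1
        = a • (WithLp.equiv 2 _ w).1 + b • (WithLp.equiv 2 _ w').1 := by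
      simp [WithLp.ofLp_add, WithLp.ofLp_smul]
    have hsnd : (WithLp.equiv 2 _ (a • w + b • w')).2
        = a • (WithLp.equiv 2 _ w).2 + b • (WithLp.equiv 2 _ w').2 := by
      simp [WithLp.ofLp_add, WithLp.ofLp_smul]
    have hθlΓ : a • θ + b • θ' ∈ Γ (WithLp.equiv 2 _ (a • w + b • w')).1 := by
      rw [hΓ]
      intro i
      have h1 : ∀ i, ζ i ((WithLp.equiv 2 _ w).1, θ) ≤ 0 := by
        have := hθΓ; rw [hΓ] at this; exact this
      have h2 : ∀ i, ζ i ((WithLp.equiv 2 _ w').1, θ') ≤ 0 := by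
        have := hθ'Γ; rw [hΓ] at this; exact this
      have hpt : (((WithLp.equiv 2 _ (a • w + b • w')).1 : EuclideanSpace ℝ (Fin m₁)),
            (a • θ + b • θ' : EuclideanSpace ℝ (Fin m₂)))
          = a • (((WithLp.equiv 2 _ w).1 : EuclideanSpace ℝ (Fin m₁)), θ)
            + b • (((WithLp.equiv 2 _ w').1 : EuclideanSpace ℝ (Fin m₁)), θ') := by
        rw [Prod.smul_mk, Prod.smul_mk, Prod.mk_add_mk, hfst]
      calc ζ i ((WithLp.equiv 2 _ (a • w + b • w')).1, a • θ + b • θ')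
          = ζ i (a • ((WithLp.equiv 2 _ w).1, θ) + b • ((WithLp.equiv 2 _ w').1, θ')) := by
            rw [hpt]
        _ ≤ a * ζ i ((WithLp.equiv 2 _ w).1, θ) + b * ζ i ((WithLp.equiv 2 _ w').1, θ') := by
            have h3 := (hζconv i).2 (Set.mem_univ (((WithLp.equiv 2 _ w).1
                : EuclideanSpace ℝ (Fin m₁)), θ))
              (Set.mem_univ (((WithLp.equiv 2 _ w').1 : EuclideanSpace ℝ (Fin m₁)), θ'))
              ha hb hab
            simpa only [smul_eq_mul] using h3
        _ ≤ 0 := add_nonpos (mul_nonpos_of_nonneg_of_nonpos ha (h1 i))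
            (mul_nonpos_of_nonneg_of_nonpos hb (h2 i))
    have hμl_le : μ (a • w + b • w') ≤ ⟪F (a • w + b • w'), a • θ + b • θ'⟫ +
        (1 / (2 * γ)) * ‖(a • θ + b • θ') -
          (WithLp.equiv 2 _ (a • w + b • w')).2‖ ^ 2 := by
      rw [hμwl]; exact hθ₀min _ hθlΓ
    -- snd norm bound
    have hzz : ‖(WithLp.equiv 2 _ w).2 - (WithLp.equiv 2 _ w').2‖ ≤ ‖w - w'‖ := by
      have hsub : (WithLp.equiv 2 _ w).2 - (WithLp.equiv 2 _ w').2 = (w - w').snd := by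
        simp [WithLp.ofLp_snd]
      have hsq := WithLp.prod_norm_sq_eq_of_L2 (w - w')
      rw [hsub]
      nlinarith [norm_nonneg (w - w').fst, norm_nonneg (w - w').snd, norm_nonneg (w - w'),
        sq_nonneg (‖(w - w').snd‖ - ‖w - w'‖)]
    have hAle : ‖fderiv ℝ F (a • w + b • w')‖ ≤ L_F :=
      fderiv_norm_aux F L_F hLF.le O hO hlip _ (hBO hwl)
    have hT1 := taylor_aux F LdF hLdF.le O (Metric.closedBall xb ε) hBconv hBO hdiff hlip'
      (a • w + b • w') hwl w hw
    have hT2 := taylor_aux F LdF hLdF.le O (Metric.closedBall xb ε) hBconv hBO hdiff hlip'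
      (a • w + b • w') hwl w' hw'
    have hkey := gap_key_aux (F w) (F w') (F (a • w + b • w'))
      (fderiv ℝ F (a • w + b • w')) w w'
      ((WithLp.equiv 2 _ w).2) ((WithLp.equiv 2 _ w').2) θ θ'
      a b γ L_F LdF Mθ ha hb hab hγ hLF hLdF hMθ hAle hT1 hT2 hθn hθ'n hzz
    rw [← hsnd] at hkey
    rw [hμw, hμw']
    linarith [hμl_le, hkey]
  refine ⟨main, 2 * (γ * L_F ^ 2 + LdF * Mθ + 1 / (2 * γ)), by positivity, ε, hε, ?_⟩
  have h2 : 2 * (γ * L_F ^ 2 + LdF * Mθ + 1 / (2 * γ)) / 2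
      = γ * L_F ^ 2 + LdF * Mθ + 1 / (2 * γ) := by ring
  rw [h2]
  exact main
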